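/- Let (Γ, d) be a covariant free first order differential calculus on a left coideal subalgebra X of a Hopf algebra H. Then for each i, the functional ε∘∂_i lies in the restricted dual X°, and Δ(ε∘∂_i) = Σ_j (ε∘∂_j) ⊗ (ε∘∂^j_i) + ε ⊗ (ε∘∂_i); in particular span{ε, ε∘∂_1, …, ε∘∂_M} is a right coideal of X°. -/

import Mathlib

open TensorProduct MulOpposite

/-- A linear functional `f` on an algebra `A` belongs to the restricted dual `A°` iff
`f(ab) = Σ_i g_i(a) h_i(b)` for finitely many functionals `g_i, h_i`. -/
def InRestrictedDual {A : Type} [Ring A] [Algebra ℂ A] (f : A →ₗ[ℂ] ℂ) : Prop :=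
  ∃ (n : ℕ) (g h : Fin n → (A →ₗ[ℂ] ℂ)), ∀ a b : A, f (a * b) = ∑ k, g k a * h k b

noncomputable section

/-- Right translation of a functional, packaged as a linear map into `V`. -/
def Tmap {A : Type} [Ring A] [Algebra ℂ A] (V : Submodule ℂ (A →ₗ[ℂ] ℂ))
    (hstab : ∀ φ ∈ V, ∀ b : A, φ.comp (LinearMap.mulRight ℂ b) ∈ V)
    (φ : A →ₗ[ℂ] ℂ) (hφ : φ ∈ V) : A →ₗ[ℂ] V where
  toFun b := ⟨φ.comp (LinearMap.mulRight ℂ b), hstab φ hφ b⟩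
  map_add' b c := by
    apply Subtype.ext
    apply LinearMap.ext; intro a
    simp [mul_add]
  map_smul' r b := by
    apply Subtype.ext
    apply LinearMap.ext; intro a
    simp [mul_smul_comm]

@[simp] lemma Tmap_val {A : Type} [Ring A] [Algebra ℂ A] (V : Submodule ℂ (A →ₗ[ℂ] ℂ))
    (hstab : ∀ φ ∈ V, ∀ b : A, φ.comp (LinearMap.mulRight ℂ b) ∈ V)
    (φ : A →ₗ[ℂ] ℂ) (hφ : φ ∈ V) (b a : A) :
    ((Tmap V hstab φ hφ b : A →ₗ[ℂ] ℂ)) a = φ (a * b) := rfl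

theorem key {A : Type} [Ring A] [Algebra ℂ A] (V : Submodule ℂ (A →ₗ[ℂ] ℂ))
    [FiniteDimensional ℂ V]
    (hstab : ∀ φ ∈ V, ∀ b : A, φ.comp (LinearMap.mulRight ℂ b) ∈ V)
    (ψ : A →ₗ[ℂ] ℂ) (hψ : ψ ∈ V) :
    ∃ (n : ℕ) (g h : Fin n → (A →ₗ[ℂ] ℂ)),
      (∀ k, g k ∈ V) ∧ (∀ k, InRestrictedDual (h k)) ∧
      ∀ a b : A, ψ (a * b) = ∑ k, g k a * h k b := by
  classical
  set n := Module.finrank ℂ V with hn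
  let bas : Module.Basis (Fin n) ℂ V := Module.finBasis ℂ V
  -- main expansion lemma for any φ ∈ V
  have main : ∀ (φ : A →ₗ[ℂ] ℂ) (hφ : φ ∈ V) (a b : A),
      φ (a * b) = ∑ k, (bas k : A →ₗ[ℂ] ℂ) a * bas.repr (Tmap V hstab φ hφ b) k := by
    intro φ hφ a b
    have h2 : φ (a * b) = ((Tmap V hstab φ hφ b : A →ₗ[ℂ] ℂ)) a := rfl
    rw [h2]
    conv_lhs => rw [(bas.sum_repr (Tmap V hstab φ hφ b)).symm]
    push_cast
    simp [mul_comm]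
  refine ⟨n, fun k => (bas k : A →ₗ[ℂ] ℂ),
    fun k => (bas.coord k).comp (Tmap V hstab ψ hψ), fun k => (bas k).2, ?_, ?_⟩
  · -- each h k is in the restricted dual
    intro k
    refine ⟨n, fun l => (bas.coord k).comp (Tmap V hstab ((bas l : A →ₗ[ℂ] ℂ)) (bas l).2),
      fun l => (bas.coord l).comp (Tmap V hstab ψ hψ), ?_⟩
    intro b c
    have hkey : Tmap V hstab ψ hψ (b * c)
        = ∑ l, (bas.repr (Tmap V hstab ψ hψ c) l) •
            Tmap V hstab ((bas l : A →ₗ[ℂ] ℂ)) (bas l).2 b := by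
      apply Subtype.ext
      push_cast
      apply LinearMap.ext; intro a
      have h3 : ψ (a * (b * c)) = ψ ((a * b) * c) := by rw [mul_assoc]
      simp only [Tmap_val, LinearMap.coe_sum, Finset.sum_apply, LinearMap.smul_apply,
        smul_eq_mul]
      rw [h3, main ψ hψ (a * b) c]
      exact Finset.sum_congr rfl fun l _ => by ring
    simp only [LinearMap.comp_apply, hkey, map_sum, map_smul, Module.Basis.coord_apply,
      smul_eq_mul]
    exact Finset.sum_congr rfl fun l _ => by ring
  · intro a b
    simp only [LinearMap.comp_apply, Module.Basis.coord_apply]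
    exact main ψ hψ a b

end

/-- for a covariant free first order differential calculus on a left coideal
subalgebra `X ⊆ H`, the functionals `ε∘∂_i` lie in `X°`, satisfy
`Δ(ε∘∂_i) = Σ_j (ε∘∂_j) ⊗ (ε∘∂^j_i) + ε ⊗ (ε∘∂_i)`, and
`span{ε, ε∘∂_1, …, ε∘∂_M}` is a right coideal of `X°`. -/
theorem stmt5
    {H : Type} [Ring H] [HopfAlgebra ℂ H] (X : Subalgebra ℂ H)
    (comulX : X →ₗ[ℂ] H ⊗[ℂ] X)
    (hcomulX : ∀ a : X,
      (TensorProduct.map (LinearMap.id) X.val.toLinearMap) (comulX a)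
        = Coalgebra.comul (R := ℂ) (a : H))
    {M : ℕ} (e : Fin M → X) (π : Fin M → Fin M → H)
    (hπ : ∀ i, comulX (e i) = ∑ j, π i j ⊗ₜ[ℂ] e j)
    (hΔπ : ∀ i j, Coalgebra.comul (R := ℂ) (π i j) = ∑ k, π i k ⊗ₜ[ℂ] π k j)
    (hεπ : ∀ i j, Coalgebra.counit (R := ℂ) (π i j) = if i = j then 1 else 0)
    {Γ : Type} [AddCommGroup Γ] [Module ℂ Γ] [Module X Γ] [Module Xᵐᵒᵖ Γ]
    [SMulCommClass X Xᵐᵒᵖ Γ] [IsScalarTower ℂ X Γ]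
    (d : X →ₗ[ℂ] Γ)
    (leibniz : ∀ a b : X, d (a * b) = a • d b + op b • d a)
    (free : ∀ ω : Γ, ∃! c : Fin M → X, ω = ∑ i, c i • d (e i))
    (P : X → Fin M → X) (hP : ∀ a, d a = ∑ i, P a i • d (e i))
    (Q : X → Fin M → Fin M → X)
    (hQ : ∀ a i, op a • d (e i) = ∑ j, Q a i j • d (e j))
    (covariant : ∃ ΔΓ : Γ →ₗ[ℂ] H ⊗[ℂ] Γ,
      ∀ (a b : X) (ι κ : Type) (_ : Fintype ι) (_ : Fintype κ)
        (a1 : ι → H) (a2 : ι → X) (b1 : κ → H) (b2 : κ → X),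
        comulX a = ∑ t, a1 t ⊗ₜ[ℂ] a2 t → comulX b = ∑ s, b1 s ⊗ₜ[ℂ] b2 s →
        ΔΓ (a • d b) = ∑ t, ∑ s, (a1 t * b1 s) ⊗ₜ[ℂ] (a2 t • d (b2 s)))
    -- the functionals ε∘∂_i, realized as linear maps
    (χ : Fin M → (X →ₗ[ℂ] ℂ))
    (hχ : ∀ i (a : X), χ i a = Coalgebra.counit (R := ℂ) ((P a i : H))) :
    -- (a) each ε∘∂_i lies in the restricted dual X°
    (∀ i, InRestrictedDual (χ i)) ∧
    -- (b) Δ(ε∘∂_i) = Σ_j (ε∘∂_j) ⊗ (ε∘∂^j_i) + ε ⊗ (ε∘∂_i)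
    (∀ (i : Fin M) (a b : X),
      χ i (a * b) =
        (∑ j, χ j a * Coalgebra.counit (R := ℂ) ((Q b j i : H)))
          + Coalgebra.counit (R := ℂ) ((a : H)) * χ i b) ∧
    -- (c) span{ε, χ_1, …, χ_M} is a right coideal of X°
    (∀ f : X →ₗ[ℂ] ℂ,
      f ∈ Submodule.span ℂ
        ({(Coalgebra.counit (R := ℂ)).comp X.val.toLinearMap} ∪ Set.range χ) →
      ∃ (n : ℕ) (g h : Fin n → (X →ₗ[ℂ] ℂ)),
        (∀ k, g k ∈ Submodule.span ℂ
          ({(Coalgebra.counit (R := ℂ)).comp X.val.toLinearMap} ∪ Set.range χ)) ∧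
        (∀ k, InRestrictedDual (h k)) ∧
        (∀ a b : X, f (a * b) = ∑ k, g k a * h k b)) := by
  classical
  -- Step 1: coefficient identity from freeness and Leibniz rule
  have coeff : ∀ a b : X, ∀ j, P (a*b) j = a * P b j + ∑ i, P a i * Q b i j := by
    intro a b
    obtain ⟨c, -, hu⟩ := free (d (a*b))
    have h1 : P (a*b) = c := hu _ (hP _)
    have h2 : (fun j => a * P b j + ∑ i, P a i * Q b i j) = c := by
      apply hu
      calc d (a*b) = a • d b + op b • d a := leibniz a b
        _ = ∑ i, (a * P b i) • d (e i) + ∑ i, P a i • (op b • d (e i)) := by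
              rw [hP b, hP a, Finset.smul_sum, Finset.smul_sum]
              congr 1
              · exact Finset.sum_congr rfl fun i _ => smul_smul a (P b i) _
              · exact Finset.sum_congr rfl fun i _ => (smul_comm (P a i) (op b) _).symm
        _ = ∑ i, (a * P b i) • d (e i) + ∑ i, ∑ j, (P a i * Q b i j) • d (e j) := by
              congr 1
              refine Finset.sum_congr rfl fun i _ => ?_
              rw [hQ b i, Finset.smul_sum]
              exact Finset.sum_congr rfl fun j _ => smul_smul _ _ _
        _ = ∑ j, (a * P b j + ∑ i, P a i * Q b i j) • d (e j) := by
              rw [Finset.sum_comm (s := Finset.univ) (t := Finset.univ)]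
              rw [← Finset.sum_add_distrib]
              refine Finset.sum_congr rfl fun j _ => ?_
              rw [add_smul, Finset.sum_smul]
    intro j
    exact congrFun (h1.trans h2.symm) j
  -- Step 2: part (b)
  have idb : ∀ (i : Fin M) (a b : X),
      χ i (a * b) =
        (∑ j, χ j a * Coalgebra.counit (R := ℂ) ((Q b j i : H)))
          + Coalgebra.counit (R := ℂ) ((a : H)) * χ i b := by
    intro i a b
    rw [hχ i (a*b), coeff a b i]
    push_cast
    rw [map_add, map_sum]
    simp only [Bialgebra.counit_mul]
    rw [hχ i b]
    simp only [← hχ]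
    rw [add_comm]
  -- the counit of X
  set εX : X →ₗ[ℂ] ℂ := (Coalgebra.counit (R := ℂ)).comp X.val.toLinearMap with hεX
  have εXapp : ∀ a : X, εX a = Coalgebra.counit (R := ℂ) ((a : H)) := fun a => rfl
  have εXmul : ∀ a b : X, εX (a * b) = εX a * εX b := by
    intro a b
    rw [εXapp, εXapp, εXapp]
    push_cast
    exact Bialgebra.counit_mul _ _
  set S : Set (X →ₗ[ℂ] ℂ) := {εX} ∪ Set.range χ with hS
  have hSfin : S.Finite := (Set.finite_singleton _).union (Set.finite_range _)
  haveI : FiniteDimensional ℂ (Submodule.span ℂ S) := FiniteDimensional.span_of_finite ℂ hSfin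
  -- Step 3: stability under right translations
  have hstab : ∀ φ ∈ Submodule.span ℂ S, ∀ b : X,
      φ.comp (LinearMap.mulRight ℂ b) ∈ Submodule.span ℂ S := by
    intro φ hφ b
    induction hφ using Submodule.span_induction with
    | mem φ hφS =>
      rcases hφS with h | ⟨i, rfl⟩
      · rw [Set.mem_singleton_iff.mp h]
        have hcomp : εX.comp (LinearMap.mulRight ℂ b) = εX b • εX := by
          apply LinearMap.ext; intro a
          simp only [LinearMap.comp_apply, LinearMap.mulRight_apply, LinearMap.smul_apply,
            smul_eq_mul]
          rw [εXmul, mul_comm]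
        rw [hcomp]
        exact Submodule.smul_mem _ _ (Submodule.subset_span (Or.inl rfl))
      · have hcomp : (χ i).comp (LinearMap.mulRight ℂ b)
            = (∑ j, Coalgebra.counit (R := ℂ) ((Q b j i : H)) • χ j) + (χ i b) • εX := by
          apply LinearMap.ext; intro a
          simp only [LinearMap.comp_apply, LinearMap.mulRight_apply, LinearMap.add_apply,
            LinearMap.coe_sum, Finset.sum_apply, LinearMap.smul_apply, smul_eq_mul]
          rw [idb i a b, εXapp]
          congr 1
          · exact Finset.sum_congr rfl fun j _ => mul_comm _ _
          · exact mul_comm _ _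
        rw [hcomp]
        refine add_mem (Submodule.sum_mem _ fun j _ => Submodule.smul_mem _ _
          (Submodule.subset_span (Or.inr ⟨j, rfl⟩)))
          (Submodule.smul_mem _ _ (Submodule.subset_span (Or.inl rfl)))
    | zero => rw [LinearMap.zero_comp]; exact zero_mem _
    | add f g _ _ hf hg => rw [LinearMap.add_comp]; exact add_mem hf hg
    | smul c f _ hf => rw [LinearMap.smul_comp]; exact Submodule.smul_mem _ _ hf
  refine ⟨?_, idb, ?_⟩
  · intro i
    obtain ⟨n, g, h, -, -, heq⟩ := key (Submodule.span ℂ S) hstab (χ i)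
      (Submodule.subset_span (Or.inr ⟨i, rfl⟩))
    exact ⟨n, g, h, heq⟩
  · intro f hf
    exact key (Submodule.span ℂ S) hstab f hf
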